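/- For any integer d ≥ 3, the complement of the d-dimensional hypercube H(d,2) is a Deza graph with parameters (2^d, 2^d - d - 1, 2^d - 2d, 2^d - 2d - 2), and its d+1 distinct eigenvalues are 2^d - d - 1 and -1 - (d - 2i) for 1 ≤ i ≤ d. -/

import Mathlib

open SimpleGraph

/-- Number of common neighbours of `u` and `v` in `G`. -/
noncomputable def cc {V : Type*} (G : SimpleGraph V) (u v : V) : ℕ :=
  Nat.card (G.commonNeighbors u v)

/-- `G` is regular of valency `k`. -/
def IsRegularNat {V : Type*} (G : SimpleGraph V) (k : ℕ) : Prop :=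
  ∀ v : V, Nat.card (G.neighborSet v) = k

/-- `G` is a Deza graph with parameters `(n, k, b, a)`. -/
def IsDeza {V : Type*} (G : SimpleGraph V) (n k b a : ℕ) : Prop :=
  a ≤ b ∧ b ≤ k ∧ k < n ∧ Nat.card V = n ∧ IsRegularNat G k ∧
  (∀ u v : V, u ≠ v → cc G u v = a ∨ cc G u v = b) ∧
  (∃ u v : V, u ≠ v ∧ cc G u v = a) ∧
  (∃ u v : V, u ≠ v ∧ cc G u v = b)

open scoped Classical in
/-- The adjacency matrix of `G` over `ℝ`. -/
noncomputable def adjMat {V : Type*} (G : SimpleGraph V) : Matrix V V ℝ :=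
  Matrix.of fun i j => if G.Adj i j then (1 : ℝ) else 0

/-- The `d`-dimensional hypercube `H(d,2)`: vertices are `{0,1}^d`, two vertices adjacent
iff they differ in exactly one coordinate. -/
def hypercube (d : ℕ) : SimpleGraph (Fin d → ZMod 2) where
  Adj x y := (Finset.univ.filter fun i => x i ≠ y i).card = 1
  symm := by
    constructor
    intro x y h
    have : (Finset.univ.filter fun i => y i ≠ x i) =
        (Finset.univ.filter fun i => x i ≠ y i) := by
      apply Finset.filter_congr
      intro i _
      exact ne_comm
    rw [this]
    exact h
  loopless := by
    constructor
    intro x h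
    simp at h


section Aux
open Finset
variable {d : ℕ}

def ee (i : Fin d) : Fin d → ZMod 2 := Pi.single i 1

lemma zmod2_cases : ∀ a : ZMod 2, a = 0 ∨ a = 1 := by decide

lemma zmod2_ne_iff : ∀ a b : ZMod 2, (a ≠ b ↔ b = a + 1) := by decide

lemma ee_apply (i j : Fin d) : ee i j = if j = i then 1 else 0 := by
  simp [ee, Pi.single_apply]

lemma ee_inj : Function.Injective (ee (d := d)) := by
  intro i j h
  by_contra hij
  have := congrFun h i
  rw [ee_apply, ee_apply, if_pos rfl, if_neg hij] at this
  exact one_ne_zero this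

lemma hyp_adj {u v : Fin d → ZMod 2} : (hypercube d).Adj u v ↔ ∃ i, v = u + ee i := by
  constructor
  · intro h
    obtain ⟨i, hi⟩ := Finset.card_eq_one.mp h
    refine ⟨i, funext fun j => ?_⟩
    have hmem : ∀ j : Fin d, j ∈ Finset.univ.filter (fun i => u i ≠ v i) ↔ j = i := by
      intro j; rw [hi]; simp
    by_cases hji : j = i
    · subst hji
      have : u j ≠ v j := by simpa using (hmem j).mpr rfl
      have := (zmod2_ne_iff _ _).mp this
      simp [this, ee_apply]
    · have : ¬ (u j ≠ v j) := by
        intro hne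
        exact hji (by simpa using (hmem j).mp (by simp [hne]))
      push_neg at this
      simp [this, ee_apply, hji]
  · rintro ⟨i, rfl⟩
    have : (Finset.univ.filter fun j => u j ≠ u j + ee i j) = {i} := by
      ext j
      simp only [Finset.mem_filter, Finset.mem_univ, true_and, Finset.mem_singleton]
      rw [ee_apply]
      by_cases hji : j = i <;> simp [hji]
    show (Finset.univ.filter fun j => u j ≠ (u + ee i) j).card = 1
    simp only [Pi.add_apply]
    rw [this]; simp

lemma add_ee_inj (u : Fin d → ZMod 2) : Function.Injective (fun i => u + ee i) := by
  intro i j h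
  exact ee_inj (by simpa using h)

lemma ee_ne_zero (i : Fin d) : ee i ≠ 0 := by
  intro h
  have := congrFun h i
  rw [ee_apply, if_pos rfl] at this
  exact one_ne_zero this

lemma neighborFinset_eq (u : Fin d → ZMod 2) [Fintype ((hypercube d).neighborSet u)] :
    (hypercube d).neighborFinset u = Finset.univ.image (fun i => u + ee i) := by
  ext v
  simp only [mem_neighborFinset, Finset.mem_image, Finset.mem_univ, true_and]
  rw [hyp_adj]
  exact ⟨fun ⟨i, h⟩ => ⟨i, h.symm⟩, fun ⟨i, h⟩ => ⟨i, h.symm⟩⟩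

/-- sign function on ZMod 2 -/
noncomputable def sgn (a : ZMod 2) : ℝ := if a = 0 then 1 else -1

lemma sgn_add (a b : ZMod 2) : sgn (a + b) = sgn a * sgn b := by
  rcases zmod2_cases a with h | h <;> rcases zmod2_cases b with h' | h' <;>
    subst h <;> subst h' <;> simp [sgn, show (1+1:ZMod 2)=0 by decide]

/-- character -/
noncomputable def chi (S u : Fin d → ZMod 2) : ℝ := sgn (∑ i, S i * u i)

lemma chi_comm (S u : Fin d → ZMod 2) : chi S u = chi u S := by
  unfold chi
  congr 1
  exact Finset.sum_congr rfl fun i _ => mul_comm _ _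

lemma chi_add (S u v : Fin d → ZMod 2) : chi S (u + v) = chi S u * chi S v := by
  unfold chi
  rw [← sgn_add]
  congr 1
  rw [← Finset.sum_add_distrib]
  exact Finset.sum_congr rfl fun i _ => by rw [Pi.add_apply, mul_add]

lemma chi_ee (S : Fin d → ZMod 2) (i : Fin d) : chi S (ee i) = sgn (S i) := by
  unfold chi
  congr 1
  rw [Finset.sum_eq_single i]
  · rw [ee_apply, if_pos rfl, mul_one]
  · intro j _ hj
    rw [ee_apply, if_neg hj, mul_zero]
  · simp

lemma sum_chi (S : Fin d → ZMod 2) :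
    (∑ u : Fin d → ZMod 2, chi S u) = if S = 0 then (2 : ℝ) ^ d else 0 := by
  by_cases hS : S = 0
  · subst hS
    simp [chi, sgn, Finset.card_univ]
  · rw [if_neg hS]
    obtain ⟨i, hi⟩ : ∃ i, S i ≠ 0 := by
      by_contra h
      push_neg at h
      exact hS (funext h)
    have hSi : S i = 1 := (zmod2_cases (S i)).resolve_left hi
    have key : (∑ u : Fin d → ZMod 2, chi S u)
        = ∑ u : Fin d → ZMod 2, chi S (u + ee i) := by
      exact (Fintype.sum_equiv (Equiv.addRight (ee i)) _ _ (fun u => rfl)).symm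
    have : (∑ u : Fin d → ZMod 2, chi S u) = -(∑ u : Fin d → ZMod 2, chi S u) := by
      nth_rewrite 1 [key]
      rw [← Finset.sum_neg_distrib]
      refine Finset.sum_congr rfl fun u _ => ?_
      rw [chi_add, chi_ee, hSi]
      simp [sgn]
    linarith

instance hypAdjDec : DecidableRel (hypercube d).Adj :=
  fun _ _ => Nat.decEq _ 1

lemma sum_adj (x : (Fin d → ZMod 2) → ℝ) (u : Fin d → ZMod 2) :
    (∑ v, if (hypercube d).Adj u v then x v else 0) = ∑ i, x (u + ee i) := by
  classical
  rw [← Finset.sum_filter]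
  have himg : Finset.univ.filter (fun v => (hypercube d).Adj u v)
      = Finset.univ.image (fun i => u + ee i) := by
    ext v
    simp only [Finset.mem_filter, Finset.mem_univ, true_and, Finset.mem_image]
    rw [hyp_adj]
    exact ⟨fun ⟨i, h⟩ => ⟨i, h.symm⟩, fun ⟨i, h⟩ => ⟨i, h.symm⟩⟩
  rw [himg, Finset.sum_image (fun i _ j _ h => add_ee_inj u h)]

lemma mulVec_hyp (x : (Fin d → ZMod 2) → ℝ) (u : Fin d → ZMod 2) :
    (adjMat (hypercube d)).mulVec x u = ∑ i, x (u + ee i) := by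
  classical
  rw [← _root_.sum_adj x u]
  unfold adjMat Matrix.mulVec dotProduct
  simp only [Matrix.of_apply]
  refine Finset.sum_congr rfl fun v _ => ?_
  by_cases h : (hypercube d).Adj u v <;> simp [h]

lemma mulVec_compl (x : (Fin d → ZMod 2) → ℝ) (u : Fin d → ZMod 2) :
    (adjMat (hypercube d)ᶜ).mulVec x u = (∑ v, x v) - x u - ∑ i, x (u + ee i) := by
  classical
  have h1 : (adjMat (hypercube d)ᶜ).mulVec x u
      = ∑ v, (x v - (if u = v then x v else 0) - (if (hypercube d).Adj u v then x v else 0)) := by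
    unfold adjMat Matrix.mulVec dotProduct
    simp only [Matrix.of_apply]
    refine Finset.sum_congr rfl fun v _ => ?_
    by_cases huv : u = v
    · subst huv
      simp [SimpleGraph.compl_adj]
    · by_cases hadj : (hypercube d).Adj u v
      · simp [SimpleGraph.compl_adj, huv, hadj]
      · simp [SimpleGraph.compl_adj, huv, hadj]
  rw [h1, Finset.sum_sub_distrib, Finset.sum_sub_distrib, Finset.sum_ite_eq, _root_.sum_adj]
  simp

def wt (S : Fin d → ZMod 2) : ℕ := (Finset.univ.filter fun i => S i = 1).card

lemma sum_sgn (S : Fin d → ZMod 2) : ∑ i, sgn (S i) = (d : ℝ) - 2 * wt S := by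
  classical
  have hsplit : (Finset.univ.filter fun i => S i = 0).card + wt S = d := by
    unfold wt
    rw [show (Finset.univ.filter fun i : Fin d => S i = 1)
        = Finset.univ.filter fun i : Fin d => ¬ (S i = 0) by
      apply Finset.filter_congr
      intro i _
      rcases zmod2_cases (S i) with h | h <;> simp [h]]
    rw [Finset.card_filter_add_card_filter_not]
    simp [Finset.card_univ]
  have : ∑ i, sgn (S i)
      = ((Finset.univ.filter fun i : Fin d => S i = 0).card : ℝ)
        + ((Finset.univ.filter fun i : Fin d => ¬ (S i = 0)).card : ℝ) * (-1) := by
    unfold sgn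
    rw [Finset.sum_ite, Finset.sum_const, Finset.sum_const]
    simp
  rw [this]
  have h2 : (Finset.univ.filter fun i : Fin d => ¬ (S i = 0)).card = wt S := by
    unfold wt
    congr 1
    apply Finset.filter_congr
    intro i _
    rcases zmod2_cases (S i) with h | h <;> simp [h]
  rw [h2]
  have := hsplit
  push_cast [← this]
  ring

lemma chi_shift_sum (S u : Fin d → ZMod 2) :
    ∑ i, chi S (u + ee i) = ((d : ℝ) - 2 * wt S) * chi S u := by
  rw [show ∑ i, chi S (u + ee i) = ∑ i, chi S u * sgn (S i) from
    Finset.sum_congr rfl fun i _ => by rw [chi_add, chi_ee]]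
  rw [← Finset.mul_sum, sum_sgn]
  ring

lemma chi_ne_zero (S : Fin d → ZMod 2) : chi S ≠ 0 := by
  intro h
  have := congrFun h 0
  simp [chi, sgn] at this

lemma wt_le (S : Fin d → ZMod 2) : wt S ≤ d := by
  simpa [wt, Finset.card_univ] using Finset.card_filter_le Finset.univ (fun i => S i = 1)

lemma wt_pos (S : Fin d → ZMod 2) (hS : S ≠ 0) : 1 ≤ wt S := by
  obtain ⟨i, hi⟩ : ∃ i, S i ≠ 0 := by
    by_contra h
    push_neg at h
    exact hS (funext h)
  have : S i = 1 := (zmod2_cases (S i)).resolve_left hi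
  refine Finset.card_pos.mpr ⟨i, ?_⟩
  simp [wt, this]

lemma mulVec_chi (S : Fin d → ZMod 2) :
    (adjMat (hypercube d)ᶜ).mulVec (chi S)
      = ((if S = 0 then (2:ℝ)^d else 0) - 1 - ((d:ℝ) - 2 * wt S)) • chi S := by
  funext u
  rw [mulVec_compl, sum_chi, chi_shift_sum]
  simp only [Pi.smul_apply, smul_eq_mul]
  by_cases hS : S = 0
  · have h1 : chi S u = 1 := by simp [hS, chi, sgn]
    rw [if_pos hS, h1]
    ring
  · rw [if_neg hS]
    ring

lemma add_self_eq_zero' (u : Fin d → ZMod 2) : u + u = 0 := by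
  funext i
  have : ∀ a : ZMod 2, a + a = 0 := by decide
  exact this (u i)

lemma wt_zero : wt (0 : Fin d → ZMod 2) = 0 := by
  simp [wt]

lemma sym_sum (y z : (Fin d → ZMod 2) → ℝ) :
    ∑ u, y u * ((adjMat (hypercube d)ᶜ).mulVec z) u
      = ∑ u, ((adjMat (hypercube d)ᶜ).mulVec y) u * z u := by
  classical
  unfold adjMat Matrix.mulVec dotProduct
  simp only [Matrix.of_apply]
  rw [Finset.sum_congr rfl (fun u _ => Finset.mul_sum _ _ _),
    Finset.sum_congr rfl (fun u _ => Finset.sum_mul _ _ _), Finset.sum_comm]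
  refine Finset.sum_congr rfl fun u _ => Finset.sum_congr rfl fun v _ => ?_
  by_cases h : (hypercube d)ᶜ.Adj u v
  · rw [if_pos h, if_pos ((hypercube d)ᶜ.adj_symm h)]
    ring
  · rw [if_neg h, if_neg (fun h' => h (((hypercube d)ᶜ).adj_symm h'))]
    ring

lemma fourier_inv (x : (Fin d → ZMod 2) → ℝ) (v : Fin d → ZMod 2) :
    ∑ S : Fin d → ZMod 2, chi S v * (∑ u, chi S u * x u) = (2:ℝ)^d * x v := by
  classical
  have h1 : ∀ S : Fin d → ZMod 2, chi S v * (∑ u, chi S u * x u)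
      = ∑ u, chi S (v + u) * x u := by
    intro S
    rw [Finset.mul_sum]
    exact Finset.sum_congr rfl fun u _ => by rw [chi_add]; ring
  rw [Finset.sum_congr rfl fun S _ => h1 S, Finset.sum_comm]
  have h2 : ∀ u : Fin d → ZMod 2, (∑ S : Fin d → ZMod 2, chi S (v + u) * x u)
      = (if v + u = 0 then (2:ℝ)^d else 0) * x u := by
    intro u
    rw [← Finset.sum_mul]
    congr 1
    rw [Finset.sum_congr rfl fun S _ => chi_comm S (v + u)]
    exact sum_chi (v + u)
  rw [Finset.sum_congr rfl fun u _ => h2 u]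
  have h3 : ∀ u : Fin d → ZMod 2, (v + u = 0) ↔ (u = v) := by
    intro u
    constructor
    · intro h
      have h4 : u = v + (v + u) := by rw [← add_assoc, add_self_eq_zero', zero_add]
      rw [h, add_zero] at h4
      exact h4
    · intro h
      rw [h]
      exact add_self_eq_zero' v
  rw [Finset.sum_congr rfl fun u _ => by rw [if_congr (h3 u) rfl rfl, ite_mul, zero_mul]]
  rw [Finset.sum_ite_eq' Finset.univ v (fun u => ((2:ℝ)^d) * x u)]
  simp

lemma exists_wt {i : ℕ} (hi : i ≤ d) : ∃ S : Fin d → ZMod 2, wt S = i := by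
  classical
  rcases eq_or_lt_of_le hi with h | h
  · refine ⟨fun _ => 1, ?_⟩
    unfold wt
    simp [Finset.card_univ, ← h]
  · set b : Fin d := ⟨i, h⟩
    refine ⟨fun j => if j < b then 1 else 0, ?_⟩
    unfold wt
    have h1 : (Finset.univ.filter fun j : Fin d => (if j < b then (1 : ZMod 2) else 0) = 1)
        = Finset.univ.filter fun j : Fin d => j < b := by
      apply Finset.filter_congr
      intro j _
      by_cases hj : j < b <;> simp [hj]
    rw [h1]
    have h2 : (Finset.univ.filter fun j : Fin d => j < b) = Finset.Iio b := by
      ext j; simp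
    rw [h2, Fin.card_Iio]

lemma spectrum_eq (hd : 3 ≤ d) :
    {μ : ℝ | ∃ x : (Fin d → ZMod 2) → ℝ, x ≠ 0 ∧ (adjMat (hypercube d)ᶜ).mulVec x = μ • x}
      = {μ : ℝ | μ = 2 ^ d - (d : ℝ) - 1 ∨
          ∃ i : ℕ, 1 ≤ i ∧ i ≤ d ∧ μ = -1 - ((d : ℝ) - 2 * (i : ℝ))} := by
  classical
  ext μ
  simp only [Set.mem_setOf_eq]
  constructor
  · rintro ⟨x, hx, heq⟩
    by_contra hcon
    push_neg at hcon
    obtain ⟨h0, hi⟩ := hcon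
    -- all Fourier coefficients vanish
    have hp : ∀ S : Fin d → ZMod 2, (∑ u, chi S u * x u) = 0 := by
      intro S
      have key : ((if S = 0 then (2:ℝ)^d else 0) - 1 - ((d:ℝ) - 2 * wt S))
            * (∑ u, chi S u * x u) = μ * (∑ u, chi S u * x u) := by
        have e1 : ∑ u, chi S u * ((adjMat (hypercube d)ᶜ).mulVec x) u
            = μ * ∑ u, chi S u * x u := by
          rw [heq, Finset.mul_sum]
          exact Finset.sum_congr rfl fun u _ => by
            simp only [Pi.smul_apply, smul_eq_mul]; ring
        have e2 : ∑ u, chi S u * ((adjMat (hypercube d)ᶜ).mulVec x) u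
            = ((if S = 0 then (2:ℝ)^d else 0) - 1 - ((d:ℝ) - 2 * wt S))
              * ∑ u, chi S u * x u := by
          rw [sym_sum, mulVec_chi, Finset.mul_sum]
          exact Finset.sum_congr rfl fun u _ => by
            simp only [Pi.smul_apply, smul_eq_mul]; ring
        rw [← e2, e1]
      by_cases hS : S = 0
      · subst hS
        rw [if_pos rfl, wt_zero] at key
        by_contra hne
        have := mul_right_cancel₀ hne key
        exact h0 (by rw [← this]; push_cast; ring)
      · rw [if_neg hS] at key
        by_contra hne
        have := mul_right_cancel₀ hne key
        exact hi (wt S) (wt_pos S hS) (wt_le S) (by rw [← this]; ring)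
    have hx0 : x = 0 := by
      funext v
      have := fourier_inv x v
      rw [Finset.sum_congr rfl fun S _ => by rw [hp S, mul_zero]] at this
      simp only [Finset.sum_const_zero] at this
      have h2 : (2:ℝ)^d ≠ 0 := by positivity
      have := this.symm
      field_simp at this
      simpa using this
    exact hx hx0
  · rintro (rfl | ⟨i, hi1, hi2, rfl⟩)
    · refine ⟨chi 0, chi_ne_zero 0, ?_⟩
      rw [mulVec_chi 0, if_pos rfl, wt_zero]
      congr 1
      push_cast
      ring
    · obtain ⟨S, hS⟩ := exists_wt hi2
      have hS0 : S ≠ 0 := by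
        intro h
        rw [h, wt_zero] at hS
        omega
      refine ⟨chi S, chi_ne_zero S, ?_⟩
      rw [mulVec_chi S, if_neg hS0, hS]
      congr 1
      ring

lemma two_mul_lt_pow {n : ℕ} (h : 3 ≤ n) : 2 * n < 2 ^ n := by
  induction n with
  | zero => omega
  | succ k ih =>
    rcases Nat.lt_or_ge k 3 with hk | hk
    · interval_cases k <;> simp_all <;> omega
    · have := ih hk
      have h2 : 2 ^ (k+1) = 2 * 2 ^ k := by ring
      omega

lemma ncard_spec (hd : 3 ≤ d) :
    ({μ : ℝ | μ = 2 ^ d - (d : ℝ) - 1 ∨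
        ∃ i : ℕ, 1 ≤ i ∧ i ≤ d ∧ μ = -1 - ((d : ℝ) - 2 * (i : ℝ))}).ncard = d + 1 := by
  have hset : {μ : ℝ | μ = 2 ^ d - (d : ℝ) - 1 ∨
        ∃ i : ℕ, 1 ≤ i ∧ i ≤ d ∧ μ = -1 - ((d : ℝ) - 2 * (i : ℝ))}
      = insert ((2:ℝ) ^ d - (d : ℝ) - 1)
          ((fun i : ℕ => -1 - ((d : ℝ) - 2 * (i : ℝ))) '' Set.Icc 1 d) := by
    ext μ
    simp only [Set.mem_setOf_eq, Set.mem_insert_iff, Set.mem_image, Set.mem_Icc]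
    constructor
    · rintro (h | ⟨i, h1, h2, h3⟩)
      · exact Or.inl h
      · exact Or.inr ⟨i, ⟨h1, h2⟩, h3.symm⟩
    · rintro (h | ⟨i, ⟨h1, h2⟩, h3⟩)
      · exact Or.inl h
      · exact Or.inr ⟨i, h1, h2, h3.symm⟩
  rw [hset]
  have hnat : (2 * d : ℝ) < 2 ^ d := by
    have := two_mul_lt_pow hd
    calc (2 * d : ℝ) < ((2:ℕ) ^ d : ℕ) := by exact_mod_cast this
    _ = (2:ℝ) ^ d := by push_cast; ring
  have hmem : ((2:ℝ) ^ d - (d : ℝ) - 1) ∉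
      ((fun i : ℕ => -1 - ((d : ℝ) - 2 * (i : ℝ))) '' Set.Icc 1 d) := by
    rintro ⟨i, ⟨hi1, hi2⟩, h⟩
    have : (i : ℝ) ≤ (d : ℝ) := by exact_mod_cast hi2
    simp only at h
    nlinarith
  have hinj : Function.Injective (fun i : ℕ => -1 - ((d : ℝ) - 2 * (i : ℝ))) := by
    intro i j h
    simp only at h
    have : (i : ℝ) = j := by linarith
    exact_mod_cast this
  rw [Set.ncard_insert_of_notMem hmem (((Set.finite_Icc 1 d).image _)),
    Set.ncard_image_of_injective _ hinj]
  rw [← Finset.coe_Icc, Set.ncard_coe_finset, Nat.card_Icc]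
  omega

noncomputable def NF (u : Fin d → ZMod 2) : Finset (Fin d → ZMod 2) :=
  Finset.univ.image (fun i => u + ee i)

lemma mem_NF {u v : Fin d → ZMod 2} : v ∈ NF u ↔ ∃ i, v = u + ee i := by
  simp only [NF, Finset.mem_image, Finset.mem_univ, true_and]
  exact ⟨fun ⟨i, h⟩ => ⟨i, h.symm⟩, fun ⟨i, h⟩ => ⟨i, h.symm⟩⟩

lemma mem_NF_iff_adj {u v : Fin d → ZMod 2} : v ∈ NF u ↔ (hypercube d).Adj u v := by
  rw [mem_NF, hyp_adj]

lemma card_NF (u : Fin d → ZMod 2) : (NF u).card = d := by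
  rw [NF, Finset.card_image_of_injective _ (add_ee_inj u)]
  simp [Finset.card_univ]

lemma self_not_mem_NF (u : Fin d → ZMod 2) : u ∉ NF u := by
  rw [mem_NF]
  rintro ⟨i, hi⟩
  have : ee i = 0 := by
    have := congrArg (fun w => w + u) hi
    simpa [add_comm, ← add_assoc, add_self_eq_zero'] using this.symm
  exact ee_ne_zero i this

lemma add_cancel_right' (a b : Fin d → ZMod 2) : a + b + b = a := by
  rw [add_assoc, add_self_eq_zero', add_zero]

lemma cc_formula (u v : Fin d → ZMod 2) :
    cc (hypercube d)ᶜ u v = 2 ^ d - (insert u (insert v (NF u ∪ NF v))).card := by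
  classical
  have hset : (hypercube d)ᶜ.commonNeighbors u v
      = ↑(Finset.univ \ insert u (insert v (NF u ∪ NF v))) := by
    ext w
    simp only [SimpleGraph.mem_commonNeighbors, Finset.coe_sdiff, Finset.coe_insert,
      Set.mem_diff, Finset.coe_univ, Set.mem_univ, true_and, Set.mem_insert_iff,
      Finset.coe_union, Set.mem_union, Finset.mem_coe]
    rw [SimpleGraph.compl_adj, SimpleGraph.compl_adj]
    constructor
    · rintro ⟨⟨h1, h2⟩, h3, h4⟩
      push_neg
      refine ⟨fun h => h1 h.symm, fun h => h3 h.symm, ?_, ?_⟩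
      · rw [mem_NF_iff_adj]; exact h2
      · rw [mem_NF_iff_adj]; exact h4
    · intro h
      push_neg at h
      obtain ⟨h1, h2, h3, h4⟩ := h
      rw [mem_NF_iff_adj] at h3 h4
      exact ⟨⟨fun h => h1 h.symm, h3⟩, fun h => h2 h.symm, h4⟩
  unfold cc
  rw [hset]
  rw [Nat.card_coe_set_eq, Set.ncard_coe_finset, Finset.card_sdiff_of_subset (Finset.subset_univ _)]
  simp [Finset.card_univ]

lemma ee_ne_add_ee {k i j : Fin d} (hij : i ≠ j) : ee k ≠ ee i + ee j := by
  intro h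
  have h1 := congrFun h i
  have h2 := congrFun h j
  rw [Pi.add_apply, ee_apply, ee_apply, ee_apply, if_pos rfl, if_neg hij] at h1
  rw [Pi.add_apply, ee_apply, ee_apply, ee_apply, if_pos rfl, if_neg (Ne.symm hij)] at h2
  rw [add_zero] at h1
  rw [zero_add] at h2
  by_cases hki : i = k
  · by_cases hkj : j = k
    · exact hij (hki.trans hkj.symm)
    · rw [if_neg hkj] at h2
      exact one_ne_zero h2.symm
  · rw [if_neg hki] at h1
    exact one_ne_zero h1.symm

lemma card_B_adj {u v : Fin d → ZMod 2} (hadj : (hypercube d).Adj u v) :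
    (insert u (insert v (NF u ∪ NF v))).card = 2 * d := by
  classical
  obtain ⟨k, rfl⟩ := hyp_adj.mp hadj
  have hvNFu : u + ee k ∈ NF u := mem_NF.mpr ⟨k, rfl⟩
  have huNFv : u ∈ NF (u + ee k) := mem_NF.mpr ⟨k, (add_cancel_right' u (ee k)).symm⟩
  rw [Finset.insert_eq_self.mpr (by
    rw [Finset.mem_insert]
    exact Or.inr (Finset.mem_union_right _ huNFv))]
  rw [Finset.insert_eq_self.mpr (Finset.mem_union_left _ hvNFu)]
  have hdisj : Disjoint (NF u) (NF (u + ee k)) := by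
    rw [Finset.disjoint_left]
    intro w hw1 hw2
    obtain ⟨a, ha⟩ := mem_NF.mp hw1
    obtain ⟨b, hb⟩ := mem_NF.mp hw2
    rw [ha] at hb
    have hab : ee a = ee k + ee b := by
      have : u + ee a = u + (ee k + ee b) := by rw [hb, add_assoc]
      exact add_left_cancel this
    by_cases hbk : k = b
    · rw [← hbk, add_self_eq_zero'] at hab
      exact ee_ne_zero a hab
    · exact ee_ne_add_ee hbk hab
  rw [Finset.card_union_of_disjoint hdisj, card_NF, card_NF]
  omega

lemma not_mem_NF_of_not_adj {u v : Fin d → ZMod 2} (h : ¬ (hypercube d).Adj u v) :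
    u ∉ NF v := by
  intro hmem
  obtain ⟨b, hb⟩ := mem_NF.mp hmem
  exact h (hyp_adj.mpr ⟨b, by rw [hb, add_cancel_right']⟩)

lemma card_B_two {u v : Fin d → ZMod 2} {i j : Fin d} (hij : i ≠ j)
    (hv : v = u + ee i + ee j) :
    (insert u (insert v (NF u ∪ NF v))).card = 2 * d := by
  classical
  have hnadj : ¬ (hypercube d).Adj u v := by
    intro h
    obtain ⟨k, hk⟩ := hyp_adj.mp h
    rw [hv, add_assoc] at hk
    exact ee_ne_add_ee hij (add_left_cancel hk).symm
  have huv : u ≠ v := by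
    intro h
    rw [hv, add_assoc] at h
    have : ee i + ee j = 0 := (add_left_cancel (a := u) (by rw [add_zero, ← h])).symm
    have h1 := congrFun this i
    rw [Pi.add_apply, ee_apply, ee_apply, if_pos rfl, if_neg hij, add_zero] at h1
    exact one_ne_zero h1
  have hinter : NF u ∩ NF v = {u + ee i, u + ee j} := by
    ext w
    simp only [Finset.mem_inter, Finset.mem_insert, Finset.mem_singleton]
    constructor
    · rintro ⟨hw1, hw2⟩
      obtain ⟨a, ha⟩ := mem_NF.mp hw1
      obtain ⟨b, hb⟩ := mem_NF.mp hw2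
      have hab : ee a = ee i + ee j + ee b := by
        have : u + ee a = u + (ee i + ee j + ee b) := by
          rw [ha] at hb; rw [hb, hv]; rw [add_assoc, add_assoc, add_assoc]
        exact add_left_cancel this
      by_cases hba : a = b
      · exfalso
        rw [← hba] at hab
        have : ee i + ee j = 0 := by
          have h2 : ee a + ee a = ee i + ee j + ee a + ee a := by rw [← hab]
          rw [add_self_eq_zero', add_cancel_right'] at h2
          exact h2.symm
        have h1 := congrFun this i
        rw [Pi.add_apply, ee_apply, ee_apply, if_pos rfl, if_neg hij, add_zero] at h1
        exact one_ne_zero h1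
      · -- ee a + ee b = ee i + ee j
        have hE : ee a + ee b = ee i + ee j := by
          rw [hab]; rw [add_cancel_right']
        have evi := congrFun hE i
        have evj := congrFun hE j
        rw [Pi.add_apply, Pi.add_apply, ee_apply, ee_apply, ee_apply, ee_apply,
          if_pos rfl, if_neg hij, add_zero] at evi
        rw [Pi.add_apply, Pi.add_apply, ee_apply, ee_apply, ee_apply, ee_apply,
          if_pos rfl, if_neg (Ne.symm hij), zero_add] at evj
        by_cases hia : i = a
        · left
          rw [ha, ← hia]
        · right
          rw [if_neg hia] at evi
          by_cases hib : i = b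
          · -- then from evj : a = j
            rw [ha]
            congr 1
            rw [← hib] at evj
            rw [if_neg (Ne.symm hij)] at evj
            by_cases hja : j = a
            · rw [hja]
            · exfalso
              rw [if_neg hja, zero_add] at evj
              exact one_ne_zero evj.symm
          · exfalso
            rw [if_neg hib, add_zero] at evi
            exact one_ne_zero evi.symm
    · rintro (h | h)
      · constructor
        · exact mem_NF.mpr ⟨i, h⟩
        · refine mem_NF.mpr ⟨j, ?_⟩
          rw [h, hv, add_cancel_right']
      · constructor
        · exact mem_NF.mpr ⟨j, h⟩
        · refine mem_NF.mpr ⟨i, ?_⟩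
          rw [h, hv]
          rw [show u + ee i + ee j + ee i = u + ee j + (ee i + ee i) by
            rw [add_assoc, add_assoc, add_assoc]; congr 1; rw [← add_assoc]; ring]
          rw [add_self_eq_zero', add_zero]
  have hcard_inter : (NF u ∩ NF v).card = 2 := by
    rw [hinter]
    rw [Finset.card_insert_of_notMem (by
      simp only [Finset.mem_singleton]
      intro h
      exact hij (ee_inj (add_left_cancel h))), Finset.card_singleton]
  have hu : u ∉ insert v (NF u ∪ NF v) := by
    rw [Finset.mem_insert]
    push_neg
    refine ⟨huv, ?_⟩
    rw [Finset.mem_union]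
    push_neg
    exact ⟨self_not_mem_NF u, not_mem_NF_of_not_adj hnadj⟩
  have hv' : v ∉ NF u ∪ NF v := by
    rw [Finset.mem_union]
    push_neg
    exact ⟨not_mem_NF_of_not_adj (fun h => hnadj h.symm), self_not_mem_NF v⟩
  rw [Finset.card_insert_of_notMem hu, Finset.card_insert_of_notMem hv']
  have := Finset.card_union_add_card_inter (NF u) (NF v)
  rw [card_NF, card_NF, hcard_inter] at this
  omega

lemma card_B_far {u v : Fin d → ZMod 2} (huv : u ≠ v)
    (hnadj : ¬ (hypercube d).Adj u v)
    (h2 : ¬ ∃ i j : Fin d, i ≠ j ∧ v = u + ee i + ee j) :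
    (insert u (insert v (NF u ∪ NF v))).card = 2 * d + 2 := by
  classical
  have hdisj : Disjoint (NF u) (NF v) := by
    rw [Finset.disjoint_left]
    intro w hw1 hw2
    obtain ⟨a, ha⟩ := mem_NF.mp hw1
    obtain ⟨b, hb⟩ := mem_NF.mp hw2
    have hva : v = u + ee a + ee b := by
      rw [ha] at hb
      have h3 : v + ee b + ee b = u + ee a + ee b := by rw [← hb]
      rw [add_cancel_right'] at h3
      exact h3
    by_cases hab : a = b
    · rw [hab, add_cancel_right'] at hva
      exact huv hva.symm
    · exact h2 ⟨a, b, hab, hva⟩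
  have hu : u ∉ insert v (NF u ∪ NF v) := by
    rw [Finset.mem_insert]
    push_neg
    refine ⟨huv, ?_⟩
    rw [Finset.mem_union]
    push_neg
    exact ⟨self_not_mem_NF u, not_mem_NF_of_not_adj hnadj⟩
  have hv' : v ∉ NF u ∪ NF v := by
    rw [Finset.mem_union]
    push_neg
    exact ⟨not_mem_NF_of_not_adj (fun h => hnadj h.symm), self_not_mem_NF v⟩
  rw [Finset.card_insert_of_notMem hu, Finset.card_insert_of_notMem hv',
    Finset.card_union_of_disjoint hdisj, card_NF, card_NF]
  omega

lemma regular_compl (u : Fin d → ZMod 2) :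
    Nat.card ((hypercube d)ᶜ.neighborSet u) = 2 ^ d - d - 1 := by
  classical
  have hset : (hypercube d)ᶜ.neighborSet u = ↑(Finset.univ \ insert u (NF u)) := by
    ext w
    simp only [SimpleGraph.mem_neighborSet, Finset.coe_sdiff, Finset.coe_univ,
      Set.mem_diff, Set.mem_univ, true_and, Finset.coe_insert, Set.mem_insert_iff,
      Finset.mem_coe]
    rw [SimpleGraph.compl_adj]
    constructor
    · rintro ⟨h1, h2⟩
      push_neg
      exact ⟨fun h => h1 h.symm, fun h => h2 (mem_NF_iff_adj.mp h)⟩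
    · intro h
      push_neg at h
      exact ⟨fun h' => h.1 h'.symm, fun h' => h.2 (mem_NF_iff_adj.mpr h')⟩
  rw [hset, Nat.card_coe_set_eq, Set.ncard_coe_finset,
    Finset.card_sdiff_of_subset (Finset.subset_univ _),
    Finset.card_insert_of_notMem (self_not_mem_NF u), card_NF]
  simp [Finset.card_univ]
  omega

lemma exists_third {i j : Fin d} (hd : 3 ≤ d) : ∃ k : Fin d, k ≠ i ∧ k ≠ j := by
  classical
  have hns : ¬ (Finset.univ ⊆ ({i, j} : Finset (Fin d))) := by
    intro hsub
    have h1 := Finset.card_le_card hsub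
    have h2 : ({i, j} : Finset (Fin d)).card ≤ 2 := by
      refine le_trans (Finset.card_insert_le _ _) ?_
      simp
    rw [Finset.card_univ] at h1
    simp at h1
    omega
  obtain ⟨k, _, hk⟩ := Finset.not_subset.mp hns
  simp only [Finset.mem_insert, Finset.mem_singleton] at hk
  push_neg at hk
  exact ⟨k, hk.1, hk.2⟩


end Aux

/-- For `d ≥ 3`, the complement of the hypercube `H(d,2)` is a Deza graph
with parameters `(2^d, 2^d - d - 1, 2^d - 2d, 2^d - 2d - 2)` whose `d+1` distinct
eigenvalues are `2^d - d - 1` and `-1 - (d - 2i)` for `1 ≤ i ≤ d`. -/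
theorem hypercube_complement_deza (d : ℕ) (hd : 3 ≤ d) :
    IsDeza (hypercube d)ᶜ (2 ^ d) (2 ^ d - d - 1) (2 ^ d - 2 * d) (2 ^ d - 2 * d - 2) ∧
    {μ : ℝ | ∃ x : (Fin d → ZMod 2) → ℝ, x ≠ 0 ∧ (adjMat (hypercube d)ᶜ).mulVec x = μ • x}
      = {μ : ℝ | μ = 2 ^ d - (d : ℝ) - 1 ∨
          ∃ i : ℕ, 1 ≤ i ∧ i ≤ d ∧ μ = -1 - ((d : ℝ) - 2 * (i : ℝ))} ∧
    ({μ : ℝ | μ = 2 ^ d - (d : ℝ) - 1 ∨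
        ∃ i : ℕ, 1 ≤ i ∧ i ≤ d ∧ μ = -1 - ((d : ℝ) - 2 * (i : ℝ))}).ncard = d + 1 := by
  classical
  have h2d : 2 * d < 2 ^ d := two_mul_lt_pow hd
  refine ⟨?_, spectrum_eq hd, ncard_spec hd⟩
  have hcc : ∀ u v : Fin d → ZMod 2, u ≠ v →
      cc (hypercube d)ᶜ u v = 2 ^ d - 2 * d - 2 ∨ cc (hypercube d)ᶜ u v = 2 ^ d - 2 * d := by
    intro u v huv
    by_cases hadj : (hypercube d).Adj u v
    · right
      rw [cc_formula, card_B_adj hadj]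
    · by_cases h2 : ∃ i j : Fin d, i ≠ j ∧ v = u + ee i + ee j
      · right
        obtain ⟨i, j, hij, hv⟩ := h2
        rw [cc_formula, card_B_two hij hv]
      · left
        rw [cc_formula, card_B_far huv hadj h2]
        omega
  refine ⟨Nat.sub_le _ _, ?_, ?_, ?_, regular_compl, hcc, ?_, ?_⟩
  · omega
  · omega
  · rw [Nat.card_eq_fintype_card]
    simp
  · -- far witness: 0 and all-ones
    refine ⟨0, (fun _ => 1), ?_, ?_⟩
    · intro h
      have := congrFun h ⟨0, by omega⟩
      exact one_ne_zero this.symm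
    · have hna : ¬ (hypercube d).Adj 0 (fun _ => 1) := by
        intro h
        obtain ⟨k, hk⟩ := hyp_adj.mp h
        obtain ⟨m, hm1, _⟩ := exists_third (i := k) (j := k) hd
        have := congrFun hk m
        rw [zero_add, ee_apply, if_neg hm1] at this
        exact one_ne_zero this
      have hn2 : ¬ ∃ i j : Fin d, i ≠ j ∧ (fun _ : Fin d => (1 : ZMod 2)) = 0 + ee i + ee j := by
        rintro ⟨i, j, hij, hv⟩
        obtain ⟨m, hm1, hm2⟩ := exists_third (i := i) (j := j) hd
        have := congrFun hv m
        rw [Pi.add_apply, Pi.add_apply, Pi.zero_apply, zero_add, ee_apply, ee_apply,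
          if_neg hm1, if_neg hm2, add_zero] at this
        exact one_ne_zero this
      have huv : (0 : Fin d → ZMod 2) ≠ (fun _ => 1) := by
        intro h
        have := congrFun h ⟨0, by omega⟩
        exact one_ne_zero this.symm
      rw [cc_formula, card_B_far huv hna hn2]
      omega
  · -- adjacent witness
    refine ⟨0, ee ⟨0, by omega⟩, ?_, ?_⟩
    · exact fun h => ee_ne_zero _ h.symm
    · have hadj : (hypercube d).Adj 0 (ee ⟨0, by omega⟩) :=
        hyp_adj.mpr ⟨⟨0, by omega⟩, (zero_add _).symm⟩
      rw [cc_formula, card_B_adj hadj]
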